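/- Let n = d·m and m = d·e for positive integers d, e, m, with d odd, and let k be an integer. Then ker(T_k)/im(N_k) ≅ ℤ/gcd(d,k), where T_k is multiplication by -km and N_k is multiplication by d on ℤ/n. -/

import Mathlib

private lemma range_mulLeft_zmod (n : ℕ) (a : ZMod n) :
    (AddMonoidHom.mulLeft a).range = AddSubgroup.zmultiples a := by
  ext x
  simp only [AddMonoidHom.mem_range, AddSubgroup.mem_zmultiples_iff]
  constructor
  · rintro ⟨y, rfl⟩
    obtain ⟨t, rfl⟩ := ZMod.intCast_surjective y
    exact ⟨t, by show t • a = a * (t : ZMod n); rw [zsmul_eq_mul, mul_comm]⟩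
  · rintro ⟨s, rfl⟩
    exact ⟨(s : ZMod n), by show a * (s : ZMod n) = s • a; rw [zsmul_eq_mul, mul_comm]⟩

/-- Let n = d·m and m = d·e for positive integers d, e, m, with d odd, and let k be an integer.
Then ker(T_k)/im(N_k) ≅ ℤ/gcd(d,k), where T_k is multiplication by -km and N_k is multiplication
by d on ℤ/n. -/
theorem stmt_7 (n d e m : ℕ) (hd : 0 < d) (he : 0 < e) (hm : 0 < m)
    (hnm : n = d * m) (hme : m = d * e) (hodd : Odd d) (k : ℤ)
    (N T : ZMod n →+ ZMod n)
    (hN : N = AddMonoidHom.mulLeft ((d : ZMod n)))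
    (hT : T = AddMonoidHom.mulLeft (-(k : ZMod n) * (m : ZMod n))) :
    Nonempty ((T.ker ⧸ N.range.addSubgroupOf T.ker) ≃+ ZMod (Int.gcd d k)) := by
  subst hN hT
  set g : ℕ := Int.gcd d k with hg
  have hgpos : 0 < g := Int.gcd_pos_of_ne_zero_left k (by exact_mod_cast hd.ne')
  have hgd : g ∣ d := Int.ofNat_dvd.mp (Int.gcd_dvd_left (d : ℤ) k)
  have hgk : (g : ℤ) ∣ k := Int.gcd_dvd_right (d : ℤ) k
  set d' : ℕ := d / g with hd'
  have hd'g : d' * g = d := Nat.div_mul_cancel hgd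
  have hn : n ≠ 0 := by rw [hnm]; positivity
  -- compute the range of N
  have hrange : (AddMonoidHom.mulLeft ((d : ZMod n))).range
      = AddSubgroup.zmultiples ((d : ZMod n)) := range_mulLeft_zmod n _
  -- compute the kernel of T
  have hker : (AddMonoidHom.mulLeft (-(k : ZMod n) * (m : ZMod n))).ker
      = AddSubgroup.zmultiples ((d' : ZMod n)) := by
    ext x
    simp only [AddMonoidHom.mem_ker, AddSubgroup.mem_zmultiples_iff]
    obtain ⟨t, rfl⟩ := ZMod.intCast_surjective x
    have key : (-(k : ZMod n) * (m : ZMod n)) * (t : ZMod n) = 0 ↔ (n : ℤ) ∣ k * m * t := by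
      rw [show (-(k : ZMod n) * (m : ZMod n)) * (t : ZMod n) = ((-(k * m * t) : ℤ) : ZMod n) by
        push_cast; ring, ZMod.intCast_zmod_eq_zero_iff_dvd, dvd_neg]
    constructor
    · intro hx
      have hdvd : (n : ℤ) ∣ k * m * t := key.mp hx
      rw [hnm] at hdvd
      push_cast at hdvd
      have hd2 : (d : ℤ) ∣ k * t := by
        rcases hdvd with ⟨c, hc⟩
        refine ⟨c, mul_left_cancel₀ (show (m : ℤ) ≠ 0 by exact_mod_cast hm.ne') ?_⟩
        linarith [hc]
      -- d' divides t
      have hcop : Int.gcd ((d : ℤ) / g) (k / g) = 1 :=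
        Int.gcd_div_gcd_div_gcd (i := (d : ℤ)) (j := k) hgpos
      have hdg : ((d' : ℤ)) = (d : ℤ) / g := by
        rw [eq_comm, Int.ediv_eq_iff_eq_mul_left (by exact_mod_cast hgpos.ne')
          (by exact_mod_cast hgd), ← hd'g]; push_cast; ring
      have hd't : (d' : ℤ) ∣ t := by
        have h1 : (d' : ℤ) * g ∣ (k / g * g) * t := by
          rw [Int.ediv_mul_cancel hgk]
          exact_mod_cast (by exact_mod_cast hd'g : ((d' * g : ℕ) : ℤ) = d) ▸ hd2
        have h2 : (d' : ℤ) ∣ (k / g) * t := by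
          rcases h1 with ⟨c, hc⟩
          refine ⟨c, mul_right_cancel₀ (show (g : ℤ) ≠ 0 by exact_mod_cast hgpos.ne') ?_⟩
          linarith [hc]
        have hcop' : IsCoprime (d' : ℤ) (k / g) := by
          rw [Int.isCoprime_iff_gcd_eq_one, hdg]
          exact hcop
        exact hcop'.dvd_of_dvd_mul_left h2
      rcases hd't with ⟨s, hs⟩
      exact ⟨s, by rw [zsmul_eq_mul, hs]; push_cast; ring⟩
    · rintro ⟨s, hs⟩
      rw [← hs, zsmul_eq_mul]
      show (-(k : ZMod n) * (m : ZMod n)) * ((s : ZMod n) * (d' : ZMod n)) = 0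
      have : (-(k : ZMod n) * (m : ZMod n)) * ((s : ZMod n) * (d' : ZMod n))
          = ((-(k / g) * s : ℤ) : ZMod n) * ((n : ℕ) : ZMod n) := by
        push_cast
        rw [show ((n : ℕ) : ZMod n) = ((n : ℤ) : ZMod n) by push_cast; ring]
        rw [show ((n : ℤ) : ZMod n) = ((d' * g * m : ℤ) : ZMod n) by
          rw [hnm]; push_cast [← hd'g]; ring]
        push_cast
        rw [show (-(k : ZMod n)) = ((-(k / g * g) : ℤ) : ZMod n) by
          rw [Int.ediv_mul_cancel hgk]; push_cast; ring]
        push_cast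
        ring
      rw [this, ZMod.natCast_self, mul_zero]
  rw [hrange, hker]
  -- cardinalities
  have hle : AddSubgroup.zmultiples ((d : ZMod n)) ≤ AddSubgroup.zmultiples ((d' : ZMod n)) := by
    rw [AddSubgroup.zmultiples_le, AddSubgroup.mem_zmultiples_iff]
    exact ⟨(g : ℤ), by rw [zsmul_eq_mul, ← hd'g]; push_cast; ring⟩
  have card_top : Nat.card (AddSubgroup.zmultiples ((d' : ZMod n))) = m * g := by
    rw [Nat.card_zmultiples, ZMod.addOrderOf_coe d' hn]
    have hd'dvd : d' ∣ n := by
      exact ⟨g * m, by rw [hnm, ← hd'g]; ring⟩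
    rw [Nat.gcd_eq_right hd'dvd]
    have hd'pos : 0 < d' := Nat.div_pos (Nat.le_of_dvd hd hgd) hgpos
    rw [hnm, ← hd'g]
    rw [show d' * g * m = (g * m) * d' by ring, Nat.mul_div_cancel _ hd'pos]
    ring
  have card_bot : Nat.card (AddSubgroup.zmultiples ((d : ZMod n))) = m := by
    rw [Nat.card_zmultiples, ZMod.addOrderOf_coe d hn]
    rw [Nat.gcd_eq_right (hnm ▸ dvd_mul_right d m), hnm, Nat.mul_div_cancel_left _ hd]
  have card_sub : Nat.card ((AddSubgroup.zmultiples ((d : ZMod n))).addSubgroupOf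
      (AddSubgroup.zmultiples ((d' : ZMod n)))) = m := by
    rw [Nat.card_congr (AddSubgroup.addSubgroupOfEquivOfLe hle).toEquiv, card_bot]
  have lagrange := AddSubgroup.card_eq_card_quotient_mul_card_addSubgroup
    ((AddSubgroup.zmultiples ((d : ZMod n))).addSubgroupOf
      (AddSubgroup.zmultiples ((d' : ZMod n))))
  rw [card_top, card_sub] at lagrange
  have card_quot : Nat.card ((AddSubgroup.zmultiples ((d' : ZMod n))) ⧸
      (AddSubgroup.zmultiples ((d : ZMod n))).addSubgroupOf
      (AddSubgroup.zmultiples ((d' : ZMod n)))) = g := by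
    have h2 : g * m = Nat.card ((AddSubgroup.zmultiples ((d' : ZMod n))) ⧸
        (AddSubgroup.zmultiples ((d : ZMod n))).addSubgroupOf
        (AddSubgroup.zmultiples ((d' : ZMod n)))) * m := by rw [← lagrange]; ring
    exact (Nat.eq_of_mul_eq_mul_right hm h2).symm
  have hcyc : IsAddCyclic ((AddSubgroup.zmultiples ((d' : ZMod n))) ⧸
      (AddSubgroup.zmultiples ((d : ZMod n))).addSubgroupOf
      (AddSubgroup.zmultiples ((d' : ZMod n)))) :=
    isAddCyclic_of_surjective (QuotientAddGroup.mk' _) (QuotientAddGroup.mk'_surjective _)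
  exact ⟨addEquivOfAddCyclicCardEq (by rw [card_quot, Nat.card_zmod])⟩
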